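/- Let A be a finite monoid generating set of a group G with the falsification by fellow traveller property (constant δ). If L ⊆ A* is an automatic structure on G that is almost geodesic, i.e., there is K such that every u ∈ L has length at most K more than a geodesic representative of ū, then there exists a geodesic automatic structure L′ ⊆ A* equivalent to L. -/

import Mathlib

set_option linter.unusedSectionVars false
set_option maxHeartbeats 1000000


/-! Words over a finite monoid generating set of a group, word length,
directed Cayley-graph distance, paths, asynchronous fellow travelling,
and the falsification-by-fellow-traveller property. -/

variable {A G : Type*} [Group G]

/-- The value in `G` of a word over the alphabet `A`. -/
def evalWord (π : A → G) (w : List A) : G := (w.map π).prod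

/-- `π : A → G` is a monoid generating set: every element is the value of a word. -/
def Generates (π : A → G) : Prop := ∀ g : G, ∃ w : List A, evalWord π w = g

/-- Word length of a group element: the least length of a word representing it. -/
noncomputable def wordLen (π : A → G) (g : G) : ℕ :=
  sInf {n | ∃ w : List A, evalWord π w = g ∧ w.length = n}

/-- Directed Cayley graph distance. -/
noncomputable def cayleyDist (π : A → G) (g h : G) : ℕ := wordLen π (g⁻¹ * h)

/-- The path in the Cayley graph determined by a word (constant after the end). -/
def pathOf (π : A → G) (w : List A) (t : ℕ) : G := evalWord π (w.take t)

/-- A word is geodesic if its length is the word length of its value. -/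
noncomputable def IsGeodesicWord (π : A → G) (w : List A) : Prop :=
  w.length = wordLen π (evalWord π w)

/-- `q` asynchronously `δ`-tracks `p`: there is a monotone proper
reparametrization `f` with `d(p t, q (f t)) ≤ δ` for all `t`. -/
def AsyncTracks (π : A → G) (δ : ℕ) (p q : ℕ → G) : Prop :=
  ∃ f : ℕ → ℕ, Monotone f ∧ (∀ N : ℕ, ∃ t, N ≤ f t) ∧
    ∀ t, cayleyDist π (p t) (q (f t)) ≤ δ

/-- Two paths asynchronously `δ`-fellow travel. -/
def AsyncFellow (π : A → G) (δ : ℕ) (p q : ℕ → G) : Prop :=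
  AsyncTracks π δ p q ∧ AsyncTracks π δ q p

/-- The falsification by fellow traveller property with constant `δ`:
every non-geodesic word is asynchronously `δ`-fellow travelled by a strictly
shorter word with the same value. -/
noncomputable def FFTP (π : A → G) (δ : ℕ) : Prop :=
  ∀ w : List A, ¬ IsGeodesicWord π w →
    ∃ v : List A, evalWord π v = evalWord π w ∧ v.length < w.length ∧
      AsyncFellow π δ (pathOf π w) (pathOf π v)

/-- The synchronous fellow traveller property with constant `δ` for a language:
words whose values differ by at most one generator stay uniformly `δ`-close with
identical parametrization. -/
noncomputable def SyncFT (π : A → G) (δ : ℕ) (L : Language A) : Prop :=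
  ∀ u ∈ L, ∀ v ∈ L,
    ((∃ a : A, evalWord π v = evalWord π u * π a) ∨ evalWord π v = evalWord π u) →
    ∀ t, cayleyDist π (pathOf π u t) (pathOf π v t) ≤ δ

/-- An automatic structure: a regular normal form with the synchronous fellow
traveller property. -/
noncomputable def IsAutomaticStructure (π : A → G) (L : Language A) : Prop :=
  Language.IsRegular L ∧ (∀ g : G, ∃ w ∈ L, evalWord π w = g) ∧ ∃ δ : ℕ, SyncFT π δ L

/-- Equivalence of structures: words with the same value asynchronously fellow
travel at a uniformly bounded distance. -/
noncomputable def EquivStructures (π : A → G) (L L' : Language A) : Prop :=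
  ∃ δ : ℕ, ∀ u v : List A, ((u ∈ L ∧ v ∈ L') ∨ (u ∈ L' ∧ v ∈ L)) →
    evalWord π u = evalWord π v → AsyncFellow π δ (pathOf π u) (pathOf π v)

/-! ### Auxiliary development -/

section Aux

variable {A G : Type*} [Group G]

lemma evalWord_nil (π : A → G) : evalWord π ([] : List A) = 1 := rfl

lemma evalWord_append (π : A → G) (u v : List A) :
    evalWord π (u ++ v) = evalWord π u * evalWord π v := by
  simp [evalWord]

lemma evalWord_cons (π : A → G) (a : A) (u : List A) :
    evalWord π (a :: u) = π a * evalWord π u := by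
  simp [evalWord]

lemma pathOf_of_le (π : A → G) {w : List A} {t : ℕ} (h : w.length ≤ t) :
    pathOf π w t = evalWord π w := by
  simp [pathOf, List.take_of_length_le h]

lemma pathOf_mul_drop (π : A → G) (w : List A) (t : ℕ) :
    pathOf π w t * evalWord π (w.drop t) = evalWord π w := by
  rw [pathOf, ← evalWord_append, List.take_append_drop]

lemma wordLen_le_length (π : A → G) (w : List A) :
    wordLen π (evalWord π w) ≤ w.length :=
  Nat.sInf_le ⟨w, rfl, rfl⟩

lemma wordLen_one (π : A → G) : wordLen π (1 : G) = 0 :=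
  Nat.le_zero.mp (Nat.sInf_le ⟨[], rfl, rfl⟩)

lemma exists_geodesic_word (π : A → G) (hgen : Generates π) (g : G) :
    ∃ w : List A, evalWord π w = g ∧ w.length = wordLen π g := by
  have hne : {n | ∃ w : List A, evalWord π w = g ∧ w.length = n}.Nonempty := by
    obtain ⟨w, hw⟩ := hgen g
    exact ⟨w.length, w, hw, rfl⟩
  exact Nat.sInf_mem hne

lemma wordLen_mul_le (π : A → G) (hgen : Generates π) (g h : G) :
    wordLen π (g * h) ≤ wordLen π g + wordLen π h := by
  obtain ⟨u, hu, hul⟩ := exists_geodesic_word π hgen g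
  obtain ⟨v, hv, hvl⟩ := exists_geodesic_word π hgen h
  have : evalWord π (u ++ v) = g * h := by rw [evalWord_append, hu, hv]
  calc wordLen π (g * h) ≤ (u ++ v).length := by
        simpa [this] using wordLen_le_length π (u ++ v)
    _ = wordLen π g + wordLen π h := by simp [hul, hvl]

lemma wordLen_gen_le (π : A → G) (a : A) : wordLen π (π a) ≤ 1 := by
  have : evalWord π [a] = π a := by simp [evalWord]
  simpa [this] using wordLen_le_length π [a]

section FintypeA
variable [Fintype A]

/-- Bound for word lengths of inverses of generators. -/
noncomputable def Cinv (π : A → G) : ℕ :=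
  Finset.univ.sup fun a : A => wordLen π (π a)⁻¹

lemma wordLen_inv_gen_le (π : A → G) (a : A) : wordLen π (π a)⁻¹ ≤ Cinv π :=
  Finset.le_sup (f := fun a : A => wordLen π (π a)⁻¹) (Finset.mem_univ a)

lemma wordLen_inv_le (π : A → G) (hgen : Generates π) (g : G) :
    wordLen π g⁻¹ ≤ Cinv π * wordLen π g := by
  obtain ⟨w, hw, hwl⟩ := exists_geodesic_word π hgen g
  rw [← hw] at hwl ⊢
  rw [← hwl]
  clear hw hwl
  induction w with
  | nil => simp [evalWord_nil, wordLen_one]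
  | cons a t ih =>
      have h1 : (evalWord π (a :: t))⁻¹ = (evalWord π t)⁻¹ * (π a)⁻¹ := by
        rw [evalWord_cons]; group
      calc wordLen π (evalWord π (a :: t))⁻¹
          ≤ wordLen π (evalWord π t)⁻¹ + wordLen π (π a)⁻¹ := by
            rw [h1]; exact wordLen_mul_le π hgen _ _
        _ ≤ Cinv π * t.length + Cinv π := Nat.add_le_add ih (wordLen_inv_gen_le π a)
        _ = Cinv π * (a :: t).length := by simp [Nat.mul_succ]

lemma cayleyDist_self (π : A → G) (g : G) : cayleyDist π g g = 0 := by
  show wordLen π (g⁻¹ * g) = 0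
  rw [inv_mul_cancel]
  exact wordLen_one π

lemma cayleyDist_triangle (π : A → G) (hgen : Generates π) (x y z : G) :
    cayleyDist π x z ≤ cayleyDist π x y + cayleyDist π y z := by
  show wordLen π (x⁻¹ * z) ≤ wordLen π (x⁻¹ * y) + wordLen π (y⁻¹ * z)
  have h : x⁻¹ * z = (x⁻¹ * y) * (y⁻¹ * z) := by group
  rw [h]
  exact wordLen_mul_le π hgen _ _

lemma cayleyDist_rev (π : A → G) (hgen : Generates π) (x y : G) :
    cayleyDist π y x ≤ Cinv π * cayleyDist π x y := by
  show wordLen π (y⁻¹ * x) ≤ Cinv π * wordLen π (x⁻¹ * y)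
  have h : y⁻¹ * x = (x⁻¹ * y)⁻¹ := by group
  rw [h]
  exact wordLen_inv_le π hgen _

lemma cayleyDist_path_le (π : A → G) (w : List A) {s t : ℕ} (h : s ≤ t) :
    cayleyDist π (pathOf π w s) (pathOf π w t) ≤ t - s := by
  have hdec : w.take t = w.take s ++ (w.drop s).take (t - s) := by
    rw [← List.take_add]
    congr 1
    omega
  have : (pathOf π w s)⁻¹ * pathOf π w t = evalWord π ((w.drop s).take (t - s)) := by
    rw [pathOf, pathOf, hdec, evalWord_append]; group
  calc cayleyDist π (pathOf π w s) (pathOf π w t)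
      ≤ ((w.drop s).take (t - s)).length := by
        rw [cayleyDist, this]; exact wordLen_le_length π _
    _ ≤ t - s := by simpa using List.length_take_le _ _

lemma cayleyDist_path_rev (π : A → G) (hgen : Generates π) (w : List A) {s t : ℕ}
    (h : s ≤ t) : cayleyDist π (pathOf π w t) (pathOf π w s) ≤ Cinv π * (t - s) :=
  calc cayleyDist π (pathOf π w t) (pathOf π w s)
      ≤ Cinv π * cayleyDist π (pathOf π w s) (pathOf π w t) :=
        cayleyDist_rev π hgen _ _
    _ ≤ Cinv π * (t - s) := Nat.mul_le_mul_left _ (cayleyDist_path_le π w h)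

lemma wordLen_le_cayley (π : A → G) (hgen : Generates π) (x y : G) :
    wordLen π y ≤ wordLen π x + cayleyDist π x y := by
  have h := wordLen_mul_le π hgen x (x⁻¹ * y)
  rwa [mul_inv_cancel_left] at h

lemma geodesic_prefix (π : A → G) (hgen : Generates π) {w : List A}
    (hw : IsGeodesicWord π w) (t : ℕ) :
    wordLen π (pathOf π w t) = min t w.length := by
  have h1 : wordLen π (pathOf π w t) ≤ min t w.length := by
    rw [← List.length_take]
    exact wordLen_le_length π (w.take t)
  have h2 : wordLen π (evalWord π w)
      ≤ wordLen π (pathOf π w t) + (w.length - t) := by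
    calc wordLen π (evalWord π w)
        ≤ wordLen π (pathOf π w t) + wordLen π (evalWord π (w.drop t)) := by
          rw [← pathOf_mul_drop π w t]; exact wordLen_mul_le π hgen _ _
      _ ≤ wordLen π (pathOf π w t) + (w.length - t) := by
          have h4 : wordLen π (evalWord π (w.drop t)) ≤ w.length - t := by
            have := wordLen_le_length π (w.drop t)
            rwa [List.length_drop] at this
          exact Nat.add_le_add_left h4 _
  have h3 : w.length = wordLen π (evalWord π w) := hw
  omega

lemma asyncTracks_refl (π : A → G) (δ : ℕ) (p : ℕ → G) : AsyncTracks π δ p p :=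
  ⟨id, monotone_id, fun N => ⟨N, le_rfl⟩, fun t => by
    simp [cayleyDist_self (π := π)]⟩

lemma asyncTracks_mono (π : A → G) {δ δ' : ℕ} (h : δ ≤ δ') {p q : ℕ → G}
    (ht : AsyncTracks π δ p q) : AsyncTracks π δ' p q := by
  obtain ⟨f, hm, hu, hd⟩ := ht
  exact ⟨f, hm, hu, fun t => le_trans (hd t) h⟩

lemma asyncTracks_trans (π : A → G) (hgen : Generates π) {δ₁ δ₂ : ℕ} {p q r : ℕ → G}
    (h1 : AsyncTracks π δ₁ p q) (h2 : AsyncTracks π δ₂ q r) :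
    AsyncTracks π (δ₁ + δ₂) p r := by
  obtain ⟨f, hfm, hfu, hfd⟩ := h1
  obtain ⟨g, hgm, hgu, hgd⟩ := h2
  refine ⟨g ∘ f, hgm.comp hfm, ?_, fun t => ?_⟩
  · intro N
    obtain ⟨s, hs⟩ := hgu N
    obtain ⟨t, ht⟩ := hfu s
    exact ⟨t, le_trans hs (hgm ht)⟩
  · calc cayleyDist π (p t) (r (g (f t)))
        ≤ cayleyDist π (p t) (q (f t)) + cayleyDist π (q (f t)) (r (g (f t))) :=
          cayleyDist_triangle π hgen _ _ _
      _ ≤ δ₁ + δ₂ := Nat.add_le_add (hfd t) (hgd (f t))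

lemma asyncFellow_refl (π : A → G) (δ : ℕ) (p : ℕ → G) : AsyncFellow π δ p p :=
  ⟨asyncTracks_refl π δ p, asyncTracks_refl π δ p⟩

lemma asyncFellow_mono (π : A → G) {δ δ' : ℕ} (h : δ ≤ δ') {p q : ℕ → G}
    (ht : AsyncFellow π δ p q) : AsyncFellow π δ' p q :=
  ⟨asyncTracks_mono π h ht.1, asyncTracks_mono π h ht.2⟩

lemma asyncFellow_trans (π : A → G) (hgen : Generates π) {δ₁ δ₂ : ℕ} {p q r : ℕ → G}
    (h1 : AsyncFellow π δ₁ p q) (h2 : AsyncFellow π δ₂ q r) :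
    AsyncFellow π (δ₁ + δ₂) p r :=
  ⟨asyncTracks_trans π hgen h1.1 h2.1, by
    have := asyncTracks_trans π hgen h2.2 h1.2
    rwa [Nat.add_comm] at this⟩

/-- Iterating the FFTP: every word with bounded length excess asynchronously
fellow travels a geodesic word with the same value. -/
lemma exists_geodesic_fellow (π : A → G) (hgen : Generates π) {δ : ℕ}
    (hfftp : FFTP π δ) :
    ∀ j : ℕ, ∀ w : List A, w.length ≤ wordLen π (evalWord π w) + j →
      ∃ v : List A, evalWord π v = evalWord π w ∧ IsGeodesicWord π v ∧
        AsyncFellow π (j * δ) (pathOf π w) (pathOf π v) := by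
  intro j
  induction j with
  | zero =>
      intro w hw
      have hgeo : IsGeodesicWord π w :=
        le_antisymm (by simpa using hw) (wordLen_le_length π w)
      exact ⟨w, rfl, hgeo, asyncFellow_refl π _ _⟩
  | succ j ih =>
      intro w hw
      by_cases hg : IsGeodesicWord π w
      · exact ⟨w, rfl, hg, asyncFellow_refl π _ _⟩
      · obtain ⟨v₁, hv₁e, hv₁l, hv₁f⟩ := hfftp w hg
        have hle : v₁.length ≤ wordLen π (evalWord π v₁) + j := by
          rw [hv₁e]; omega
        obtain ⟨v, hve, hvg, hvf⟩ := ih v₁ hle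
        refine ⟨v, by rw [hve, hv₁e], hvg, ?_⟩
        have := asyncFellow_trans π hgen hv₁f hvf
        exact asyncFellow_mono π (by ring_nf; omega) this

/-- Synchronisation: an asynchronous fellow traveller which is geodesic, has the
same value and almost the same length is a synchronous fellow traveller. -/
lemma sync_of_async (π : A → G) (hgen : Generates π) {w v : List A} {j δ' : ℕ}
    (hv : IsGeodesicWord π v) (he : evalWord π v = evalWord π w)
    (hlen : w.length ≤ v.length + j)
    (h : AsyncTracks π δ' (pathOf π w) (pathOf π v)) :
    ∀ t, cayleyDist π (pathOf π w t) (pathOf π v t)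
      ≤ δ' + 2 * Cinv π * δ' + j := by
  intro t
  obtain ⟨f, hfm, hfu, hfd⟩ := h
  have hvlen : v.length = wordLen π (evalWord π w) := by rw [← he]; exact hv
  by_cases hle : w.length ≤ t
  · -- beyond the end of `w` both paths are at the common endpoint
    have h1 : pathOf π w t = evalWord π w := pathOf_of_le π hle
    have h2 : v.length ≤ t := le_trans (by rw [hvlen]; exact wordLen_le_length π w) hle
    have h3 : pathOf π v t = evalWord π w := by rw [pathOf_of_le π h2, he]
    rw [h1, h3, cayleyDist_self]
    exact Nat.zero_le _
  · push_neg at hle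
    set C := Cinv π with hC
    have hℓ1 : wordLen π (pathOf π w t) ≤ t := by
      have h1 : wordLen π (pathOf π w t) ≤ min t w.length := by
        rw [← List.length_take]
        exact wordLen_le_length π (w.take t)
      omega
    have hℓ2 : t ≤ wordLen π (pathOf π w t) + j := by
      have h2 : wordLen π (evalWord π w)
          ≤ wordLen π (pathOf π w t) + (w.length - t) := by
        calc wordLen π (evalWord π w)
            ≤ wordLen π (pathOf π w t) + wordLen π (evalWord π (w.drop t)) := by
              rw [← pathOf_mul_drop π w t]
              exact wordLen_mul_le π hgen _ _
          _ ≤ wordLen π (pathOf π w t) + (w.length - t) := by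
              have h4 : wordLen π (evalWord π (w.drop t)) ≤ w.length - t := by
                have := wordLen_le_length π (w.drop t)
                rwa [List.length_drop] at this
              exact Nat.add_le_add_left h4 _
      omega
    set s := min (f t) v.length with hs
    have hps : pathOf π v (f t) = pathOf π v s := by
      rcases le_total (f t) v.length with h | h
      · rw [hs, min_eq_left h]
      · rw [pathOf_of_le π h, hs, min_eq_right h, pathOf_of_le π le_rfl]
    have hws : wordLen π (pathOf π v s) = s := by
      have := geodesic_prefix π hgen hv s
      omega
    have hd := hfd t
    rw [hps] at hd
    have h5 : s ≤ wordLen π (pathOf π w t) + δ' := by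
      calc s = wordLen π (pathOf π v s) := hws.symm
        _ ≤ wordLen π (pathOf π w t)
            + cayleyDist π (pathOf π w t) (pathOf π v s) :=
            wordLen_le_cayley π hgen _ _
        _ ≤ wordLen π (pathOf π w t) + δ' := Nat.add_le_add_left hd _
    have h6 : wordLen π (pathOf π w t) ≤ s + C * δ' := by
      have hrev : cayleyDist π (pathOf π v s) (pathOf π w t) ≤ C * δ' :=
        le_trans (cayleyDist_rev π hgen _ _) (Nat.mul_le_mul_left _ hd)
      calc wordLen π (pathOf π w t)
          ≤ wordLen π (pathOf π v s)
            + cayleyDist π (pathOf π v s) (pathOf π w t) :=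
            wordLen_le_cayley π hgen _ _
        _ ≤ s + C * δ' := by rw [hws]; exact Nat.add_le_add_left hrev _
    have htri := cayleyDist_triangle π hgen
      (pathOf π w t) (pathOf π v s) (pathOf π v t)
    have hgoal : δ' + 2 * C * δ' + j = δ' + (C * δ' + C * δ') + j := by ring
    rw [hgoal]
    rcases le_total s t with hst | hst
    · have hfor := cayleyDist_path_le π v hst
      have hts : t - s ≤ C * δ' + j := by omega
      have : cayleyDist π (pathOf π v s) (pathOf π v t) ≤ C * δ' + j := le_trans hfor hts
      omega
    · have hback := cayleyDist_path_rev π hgen v hst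
      have hst' : s - t ≤ δ' := by omega
      have : cayleyDist π (pathOf π v s) (pathOf π v t) ≤ C * δ' := le_trans hback
        (Nat.mul_le_mul_left _ hst')
      omega

/-- The language of words admitting a strictly shorter synchronous `D`-fellow
traveller with the same value. -/
def SLang (π : A → G) (D : ℕ) : Language A :=
  {w | ∃ v : List A, v.length < w.length ∧ evalWord π v = evalWord π w ∧
    ∀ t ≤ w.length, cayleyDist π (pathOf π w t) (pathOf π v t) ≤ D}

lemma geodesic_nil (π : A → G) : IsGeodesicWord π ([] : List A) := by
  show (0 : ℕ) = wordLen π (evalWord π [])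
  rw [evalWord_nil, wordLen_one]

lemma SLang_nongeo (π : A → G) {D : ℕ} {w : List A} (h : w ∈ SLang π D) :
    ¬ IsGeodesicWord π w := by
  obtain ⟨v, hvl, hve, -⟩ := h
  intro hg
  have : wordLen π (evalWord π w) ≤ v.length := by
    rw [← hve]; exact wordLen_le_length π v
  rw [IsGeodesicWord] at hg
  omega

lemma prefix_geodesic (π : A → G) (hgen : Generates π) {w p : List A}
    (hw : IsGeodesicWord π w) (hp : p <+: w) : IsGeodesicWord π p := by
  obtain ⟨r, rfl⟩ := hp
  have h1 : wordLen π (evalWord π (p ++ r))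
      ≤ wordLen π (evalWord π p) + wordLen π (evalWord π r) := by
    rw [evalWord_append]; exact wordLen_mul_le π hgen _ _
  have h2 : wordLen π (evalWord π p) ≤ p.length := wordLen_le_length π p
  have h3 : wordLen π (evalWord π r) ≤ r.length := wordLen_le_length π r
  have h4 : (p ++ r).length = wordLen π (evalWord π (p ++ r)) := hw
  rw [List.length_append] at h4
  show p.length = wordLen π (evalWord π p)
  omega

/-- The constant for the geodesic-detecting language. -/
noncomputable def Dgeo (π : A → G) [Fintype A] (δ : ℕ) : ℕ :=
  (Cinv π + 1) * δ + 2 * Cinv π * ((Cinv π + 1) * δ) + (Cinv π + 1)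

lemma minNonGeo_mem (π : A → G) (hgen : Generates π) {δ : ℕ} (hfftp : FFTP π δ)
    {w : List A} (hng : ¬ IsGeodesicWord π w)
    (hpre : IsGeodesicWord π (w.take (w.length - 1))) :
    w ∈ SLang π (Dgeo π δ) := by
  set C := Cinv π with hC
  have hwne : w ≠ [] := by
    rintro rfl
    exact hng (geodesic_nil π)
  have hn1 : 1 ≤ w.length := by
    cases w with
    | nil => exact absurd rfl hwne
    | cons a t => simp
  have hj : w.length ≤ wordLen π (evalWord π w) + (C + 1) := by
    have hlt : (w.take (w.length - 1)).length = w.length - 1 := by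
      rw [List.length_take]; omega
    have htake : w.length - 1 = wordLen π (evalWord π (w.take (w.length - 1))) :=
      hlt.symm.trans hpre
    have hsplit : evalWord π (w.take (w.length - 1))
        = evalWord π w * (evalWord π (w.drop (w.length - 1)))⁻¹ := by
      rw [← pathOf_mul_drop π w (w.length - 1)]
      show pathOf π w (w.length - 1) = _
      group
    have hdroplen : (w.drop (w.length - 1)).length = 1 := by
      rw [List.length_drop]; omega
    have hdrop : wordLen π (evalWord π (w.drop (w.length - 1))) ≤ 1 := by
      have := wordLen_le_length π (w.drop (w.length - 1))
      omega
    have hbound : w.length - 1 ≤ wordLen π (evalWord π w) + C := by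
      calc w.length - 1 = wordLen π (evalWord π (w.take (w.length - 1))) := htake
        _ ≤ wordLen π (evalWord π w)
            + wordLen π (evalWord π (w.drop (w.length - 1)))⁻¹ := by
            rw [hsplit]; exact wordLen_mul_le π hgen _ _
        _ ≤ wordLen π (evalWord π w) + C * wordLen π (evalWord π (w.drop (w.length - 1))) := by
            exact Nat.add_le_add_left (wordLen_inv_le π hgen _) _
        _ ≤ wordLen π (evalWord π w) + C := by
            have := Nat.mul_le_mul_left C hdrop
            omega
    omega
  obtain ⟨v, hve, hvg, hvf⟩ := exists_geodesic_fellow π hgen hfftp (C + 1) w hj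
  have hvlen : v.length = wordLen π (evalWord π w) := by
    have h : v.length = wordLen π (evalWord π v) := hvg
    rw [hve] at h
    exact h
  have hvlt : v.length < w.length := by
    have h1 : wordLen π (evalWord π w) ≤ w.length := wordLen_le_length π w
    have h2 : w.length ≠ wordLen π (evalWord π w) := hng
    omega
  have hsync := sync_of_async π hgen (j := C + 1) hvg hve (by omega) hvf.1
  refine ⟨v, hvlt, hve, fun t _ => ?_⟩
  show cayleyDist π (pathOf π w t) (pathOf π v t) ≤ Dgeo π δ
  unfold Dgeo
  rw [← hC]
  exact hsync t

lemma geo_iff_no_prefix (π : A → G) (hgen : Generates π) {δ : ℕ}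
    (hfftp : FFTP π δ) (w : List A) :
    IsGeodesicWord π w ↔ ∀ p, p <+: w → p ∉ SLang π (Dgeo π δ) := by
  constructor
  · intro hw p hp hpS
    exact SLang_nongeo π hpS (prefix_geodesic π hgen hw hp)
  · intro h
    by_contra hng
    classical
    have hP : ¬ IsGeodesicWord π (w.take w.length) := by
      rwa [List.take_length]
    have hex : ∃ n, ¬ IsGeodesicWord π (w.take n) := ⟨w.length, hP⟩
    set n₀ := Nat.find hex with hn₀def
    have hn₀ : ¬ IsGeodesicWord π (w.take n₀) := Nat.find_spec hex
    have hmin : ∀ m, m < n₀ → IsGeodesicWord π (w.take m) := fun m hm => by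
      by_contra hc
      exact Nat.find_min hex hm hc
    have hn₀pos : 1 ≤ n₀ := by
      rcases Nat.eq_zero_or_pos n₀ with h0 | h1
      · exfalso
        apply hn₀
        rw [h0]
        simpa using geodesic_nil π
      · exact h1
    have hn₀le : n₀ ≤ w.length := Nat.find_le hP
    set p := w.take n₀ with hp
    have hplen : p.length = n₀ := by rw [hp, List.length_take]; omega
    have hppre : IsGeodesicWord π (p.take (p.length - 1)) := by
      have : p.take (p.length - 1) = w.take (n₀ - 1) := by
        rw [hp, List.take_take, hplen]
        congr 1
        omega
      rw [this]
      exact hmin (n₀ - 1) (by omega)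
    have hpS : p ∈ SLang π (Dgeo π δ) := minNonGeo_mem π hgen hfftp hn₀ hppre
    exact h p (List.take_prefix n₀ w) hpS

end FintypeA

section Automata

lemma evalWord_singleton (π : A → G) (a : A) : evalWord π [a] = π a := by
  simp [evalWord]

lemma pathOf_zero (π : A → G) (w : List A) : pathOf π w 0 = 1 := rfl

lemma pathOf_append_le (π : A → G) {w : List A} (w' : List A) {t : ℕ}
    (h : t ≤ w.length) : pathOf π (w ++ w') t = pathOf π w t := by
  rw [pathOf, pathOf, List.take_append_of_le_length h]

lemma isRegular_of_dfa {A : Type*} {σ : Type*} [Fintype σ] (M : DFA A σ) :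
    M.accepts.IsRegular :=
  ⟨Fin (Fintype.card σ), inferInstance, DFA.reindex (Fintype.equivFin σ) M,
    DFA.accepts_reindex M _⟩

variable [Fintype A]

lemma ball_finite (π : A → G) (hgen : Generates π) (D : ℕ) :
    {g : G | wordLen π g ≤ D}.Finite := by
  have hsub : {g : G | wordLen π g ≤ D} ⊆ evalWord π '' {w : List A | w.length ≤ D} := by
    intro g hg
    obtain ⟨w, hw, hwl⟩ := exists_geodesic_word π hgen g
    refine ⟨w, ?_, hw⟩
    simp only [Set.mem_setOf_eq] at hg ⊢
    omega
  exact ((List.finite_length_le A D).image _).subset hsub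

/-- The nondeterministic automaton recognising `SLang π D`: it guesses a shorter
word and tracks the difference of path values, within the ball of radius `D`. -/
def sNFA (π : A → G) (D : ℕ) : NFA A ({g : G | wordLen π g ≤ D} × Bool) where
  step p a :=
    {s | (p.2 = false ∧ s.2 = false ∧ ∃ b : A, (s.1 : G) = (π a)⁻¹ * p.1 * π b)
       ∨ (s.2 = true ∧ (s.1 : G) = (π a)⁻¹ * p.1)}
  start := {s | (s.1 : G) = 1 ∧ s.2 = false}
  accept := {s | (s.1 : G) = 1 ∧ s.2 = true}

lemma sNFA_invariant (π : A → G) (D : ℕ) (w : List A)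
    (s : {g : G | wordLen π g ≤ D} × Bool) :
    s ∈ (sNFA π D).evalFrom (sNFA π D).start w ↔
      ∃ v : List A, (s.2 = false → v.length = w.length) ∧
        (s.2 = true → v.length < w.length) ∧
        (s.1 : G) = (evalWord π w)⁻¹ * evalWord π v ∧
        ∀ t ≤ w.length, wordLen π ((pathOf π w t)⁻¹ * pathOf π v t) ≤ D := by
  induction w using List.reverseRecOn generalizing s with
  | nil =>
      show s ∈ (sNFA π D).start ↔ _
      constructor
      · rintro ⟨h1, h2⟩
        refine ⟨[], fun _ => rfl, fun h => by rw [h2] at h; exact absurd h (by simp), ?_, ?_⟩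
        · rw [h1, evalWord_nil]; group
        · intro t ht
          have ht0 : t = 0 := Nat.le_zero.mp ht
          subst ht0
          simp [pathOf_zero, wordLen_one]
      · rintro ⟨v, hf, ht, he, -⟩
        rcases Bool.eq_false_or_eq_true s.2 with h2 | h2
        · exact absurd (ht h2) (by simp)
        · have hv : v.length = 0 := hf h2
          have : v = [] := List.length_eq_zero_iff.mp hv
          subst this
          refine ⟨?_, h2⟩
          rw [he, evalWord_nil]; group
  | append_singleton w a ih =>
      rw [NFA.evalFrom_append, NFA.evalFrom_singleton, NFA.mem_stepSet]
      constructor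
      · rintro ⟨p, hp, hstep⟩
        obtain ⟨v, hvf, hvt, hve, hvb⟩ := (ih p).mp hp
        rcases hstep with ⟨hp2, hs2, b, hsb⟩ | ⟨hs2, hsb⟩
        · -- the guessed word continues with `b`
          have hvl : v.length = w.length := hvf hp2
          refine ⟨v ++ [b], fun _ => by simp only [List.length_append, List.length_singleton]; omega, fun h => by rw [hs2] at h; exact absurd h (by simp), ?_, ?_⟩
          · rw [hsb, hve, evalWord_append, evalWord_append]
            simp only [evalWord_singleton]
            group
          · intro t ht
            rcases Nat.lt_or_ge t (w.length + 1) with htl | htl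
            · have ht' : t ≤ w.length := by omega
              rw [pathOf_append_le π [a] ht', pathOf_append_le π [b] (by omega)]
              exact hvb t ht'
            · have ht1 : t = w.length + 1 := by
                simp only [List.length_append, List.length_singleton] at ht
                omega
              have h1 : pathOf π (w ++ [a]) t = evalWord π (w ++ [a]) :=
                pathOf_of_le π (by simp [ht1])
              have h2 : pathOf π (v ++ [b]) t = evalWord π (v ++ [b]) :=
                pathOf_of_le π (by simp [ht1, hvl])
              rw [h1, h2]
              have : (evalWord π (w ++ [a]))⁻¹ * evalWord π (v ++ [b]) = (s.1 : G) := by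
                rw [hsb, hve, evalWord_append, evalWord_append]
                simp only [evalWord_singleton]
                group
              rw [this]
              exact s.1.2
        · -- the guessed word has ended
          have hvl : v.length ≤ w.length := by
            rcases Bool.eq_false_or_eq_true p.2 with h2 | h2
            · exact le_of_lt (hvt h2)
            · exact le_of_eq (hvf h2)
          refine ⟨v, fun h => by rw [hs2] at h; exact absurd h (by simp), fun _ => by simp only [List.length_append, List.length_singleton]; omega, ?_, ?_⟩
          · rw [hsb, hve, evalWord_append]
            simp only [evalWord_singleton]
            group
          · intro t ht
            rcases Nat.lt_or_ge t (w.length + 1) with htl | htl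
            · have ht' : t ≤ w.length := by omega
              rw [pathOf_append_le π [a] ht']
              exact hvb t ht'
            · have ht1 : t = w.length + 1 := by
                simp only [List.length_append, List.length_singleton] at ht
                omega
              have h1 : pathOf π (w ++ [a]) t = evalWord π (w ++ [a]) :=
                pathOf_of_le π (by simp [ht1])
              have h2 : pathOf π v t = evalWord π v := pathOf_of_le π (by omega)
              rw [h1, h2]
              have : (evalWord π (w ++ [a]))⁻¹ * evalWord π v = (s.1 : G) := by
                rw [hsb, hve, evalWord_append]
                simp only [evalWord_singleton]
                group
              rw [this]
              exact s.1.2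
      · rintro ⟨v, hvf, hvt, hve, hvb⟩
        rcases Bool.eq_false_or_eq_true s.2 with h2 | h2
        · -- s.2 = true : the guessed word v already ended
          have hvl : v.length ≤ w.length := by
            have := hvt h2
            simp only [List.length_append, List.length_singleton] at this
            omega
          have hball : wordLen π ((evalWord π w)⁻¹ * evalWord π v) ≤ D := by
            have h := hvb w.length (by simp)
            rw [pathOf_append_le π [a] le_rfl, pathOf_of_le π hvl] at h
            simp only [pathOf, List.take_length] at h
            exact h
          refine ⟨(⟨⟨(evalWord π w)⁻¹ * evalWord π v, hball⟩,
              if v.length = w.length then false else true⟩ :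
              {g : G | wordLen π g ≤ D} × Bool), ?_, ?_⟩
          · refine (ih _).mpr ⟨v, ?_, ?_, rfl, ?_⟩
            · intro h
              split at h
              · omega
              · simp at h
            · intro h
              split at h
              · simp at h
              · omega
            · intro t ht
              have := hvb t (by simp; omega)
              rwa [pathOf_append_le π [a] ht] at this
          · right
            refine ⟨h2, ?_⟩
            show (s.1 : G) = (π a)⁻¹ * ((evalWord π w)⁻¹ * evalWord π v)
            rw [hve, evalWord_append]
            simp only [evalWord_singleton]
            group
        · -- s.2 = false : the guessed word is v' ++ [b]
          have hvl : v.length = w.length + 1 := by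
            have := hvf h2
            simpa using this
          rcases v.eq_nil_or_concat' with rfl | ⟨v', b, rfl⟩
          · simp at hvl
          have hv'l : v'.length = w.length := by
            simp only [List.length_append, List.length_singleton] at hvl
            omega
          have hball : wordLen π ((evalWord π w)⁻¹ * evalWord π v') ≤ D := by
            have h := hvb w.length (by simp)
            rw [pathOf_append_le π [a] le_rfl,
              pathOf_append_le π (w := v') [b] (le_of_eq hv'l.symm)] at h
            simp only [pathOf, List.take_length] at h
            rw [← hv'l] at h
            rwa [List.take_length] at h
          refine ⟨(⟨⟨(evalWord π w)⁻¹ * evalWord π v', hball⟩, false⟩ :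
              {g : G | wordLen π g ≤ D} × Bool), ?_, ?_⟩
          · refine (ih _).mpr ⟨v', fun _ => hv'l, fun h => by simp at h, rfl, ?_⟩
            intro t ht
            have := hvb t (by simp; omega)
            rwa [pathOf_append_le π [a] ht, pathOf_append_le π [b] (by omega)] at this
          · left
            refine ⟨rfl, h2, b, ?_⟩
            show (s.1 : G) = (π a)⁻¹ * ((evalWord π w)⁻¹ * evalWord π v') * π b
            rw [hve, evalWord_append, evalWord_append]
            simp only [evalWord_singleton]
            group

lemma SLang_regular (π : A → G) (hgen : Generates π) (D : ℕ) :
    (SLang π D).IsRegular := by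
  classical
  haveI : Fintype {g : G | wordLen π g ≤ D} := (ball_finite π hgen D).fintype
  have hacc : (sNFA π D).accepts = SLang π D := by
    ext w
    rw [NFA.mem_accepts]
    constructor
    · rintro ⟨s, hsa, hsr⟩
      obtain ⟨v, hvf, hvt, hve, hvb⟩ := (sNFA_invariant π D w s).mp hsr
      obtain ⟨hs1, hs2⟩ := hsa
      refine ⟨v, hvt hs2, ?_, ?_⟩
      · rw [hs1] at hve
        have : evalWord π w * ((evalWord π w)⁻¹ * evalWord π v) = evalWord π w * 1 := by
          rw [← hve]
        rw [mul_inv_cancel_left, mul_one] at this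
        exact this
      · intro t ht
        exact hvb t ht
    · rintro ⟨v, hvl, hve, hvb⟩
      have hball : wordLen π ((evalWord π w)⁻¹ * evalWord π v) ≤ D := by
        rw [hve, inv_mul_cancel, wordLen_one]
        exact Nat.zero_le _
      refine ⟨(⟨⟨(evalWord π w)⁻¹ * evalWord π v, hball⟩, true⟩ :
          {g : G | wordLen π g ≤ D} × Bool), ⟨?_, rfl⟩, ?_⟩
      · show (evalWord π w)⁻¹ * evalWord π v = 1
        rw [hve, inv_mul_cancel]
      · refine (sNFA_invariant π D w _).mpr ⟨v, fun h => by simp at h, fun _ => hvl, rfl, ?_⟩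
        intro t ht
        exact hvb t ht
  have : (sNFA π D).toDFA.accepts = SLang π D := by
    rw [NFA.toDFA_correct]
    exact hacc
  exact this ▸ isRegular_of_dfa (sNFA π D).toDFA

lemma prefix_concat_cases {α : Type*} {p x : List α} {a : α}
    (h : p <+: x ++ [a]) : p <+: x ∨ p = x ++ [a] := by
  rcases Nat.lt_or_ge p.length (x.length + 1) with hl | hl
  · left
    have hp := List.prefix_iff_eq_take.mp h
    rw [List.take_append_of_le_length (by omega)] at hp
    rw [hp]
    exact List.take_prefix _ _
  · right
    have hlen : p.length = (x ++ [a]).length := by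
      have := h.length_le
      simp only [List.length_append, List.length_singleton] at this ⊢
      omega
    exact List.IsPrefix.eq_of_length h hlen

open Classical in
/-- The DFA accepting words none of whose prefixes is accepted by `M`. -/
noncomputable def prefixAvoidDFA {B σ : Type*} (M : DFA B σ) : DFA B (Option σ) where
  step q? a := q?.bind fun q =>
    if M.step q a ∈ M.accept then none else some (M.step q a)
  start := if M.start ∈ M.accept then none else some M.start
  accept := {q? | q? ≠ none}

open Classical in
lemma prefixAvoid_eval {B σ : Type*} (M : DFA B σ) (x : List B) :
    (prefixAvoidDFA M).eval x =
      if ∃ p, p <+: x ∧ p ∈ M.accepts then none else some (M.eval x) := by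
  classical
  induction x using List.reverseRecOn with
  | nil =>
      have hiff : (∃ p, p <+: ([] : List B) ∧ p ∈ M.accepts) ↔ M.start ∈ M.accept := by
        constructor
        · rintro ⟨p, hp, hacc⟩
          rw [List.prefix_nil.mp hp] at hacc
          exact hacc
        · intro h
          exact ⟨[], List.prefix_rfl, h⟩
      show (prefixAvoidDFA M).start = _
      by_cases hs : M.start ∈ M.accept
      · rw [if_pos (hiff.mpr hs)]
        show (if M.start ∈ M.accept then none else some M.start) = none
        rw [if_pos hs]
      · rw [if_neg (fun hc => hs (hiff.mp hc))]
        show (if M.start ∈ M.accept then none else some M.start) = some (M.eval [])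
        rw [if_neg hs]
        rfl
  | append_singleton x a ih =>
      rw [DFA.eval_append_singleton, ih]
      by_cases hx : ∃ p, p <+: x ∧ p ∈ M.accepts
      · rw [if_pos hx]
        have hx' : ∃ p, p <+: x ++ [a] ∧ p ∈ M.accepts := by
          obtain ⟨p, hp, h⟩ := hx
          exact ⟨p, hp.trans (List.prefix_append x [a]), h⟩
        rw [if_pos hx']
        rfl
      · rw [if_neg hx]
        have hstep : (prefixAvoidDFA M).step (some (M.eval x)) a
            = if M.step (M.eval x) a ∈ M.accept then none
              else some (M.step (M.eval x) a) := rfl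
        show (prefixAvoidDFA M).step (some (M.eval x)) a = _
        rw [hstep]
        have hmem : (M.step (M.eval x) a ∈ M.accept) ↔ (x ++ [a]) ∈ M.accepts := by
          rw [DFA.mem_accepts, DFA.eval_append_singleton]
        by_cases hm : (x ++ [a]) ∈ M.accepts
        · rw [if_pos (hmem.mpr hm), if_pos ⟨x ++ [a], List.prefix_rfl, hm⟩]
        · rw [if_neg (fun hc => hm (hmem.mp hc)), if_neg ?_,
            DFA.eval_append_singleton]
          rintro ⟨p, hp, h⟩
          rcases prefix_concat_cases hp with h1 | h1
          · exact hx ⟨p, h1, h⟩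
          · rw [h1] at h
            exact hm h

lemma prefixAvoid_accepts {B σ : Type*} (M : DFA B σ) :
    (prefixAvoidDFA M).accepts = {w | ∀ p, p <+: w → p ∉ M.accepts} := by
  classical
  ext x
  rw [DFA.mem_accepts]
  show ((prefixAvoidDFA M).eval x ≠ none) ↔ _
  rw [prefixAvoid_eval]
  by_cases h : ∃ p, p <+: x ∧ p ∈ M.accepts
  · rw [if_pos h]
    constructor
    · intro hc
      exact absurd rfl hc
    · intro hall
      obtain ⟨p, hp, hacc⟩ := h
      exact absurd hacc (hall p hp)
  · rw [if_neg h]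
    constructor
    · intro _ p hp hacc
      exact h ⟨p, hp, hacc⟩
    · intro _
      simp

/-- Product DFA for language intersection. -/
def interDFA {B σ τ : Type*} (M : DFA B σ) (N : DFA B τ) : DFA B (σ × τ) where
  step s a := (M.step s.1 a, N.step s.2 a)
  start := (M.start, N.start)
  accept := {s | s.1 ∈ M.accept ∧ s.2 ∈ N.accept}

lemma interDFA_evalFrom {B σ τ : Type*} (M : DFA B σ) (N : DFA B τ)
    (s : σ) (t : τ) (x : List B) :
    (interDFA M N).evalFrom (s, t) x = (M.evalFrom s x, N.evalFrom t x) := by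
  induction x generalizing s t with
  | nil => rfl
  | cons a x ih => exact ih (M.step s a) (N.step t a)

lemma interDFA_accepts {B σ τ : Type*} (M : DFA B σ) (N : DFA B τ) :
    (interDFA M N).accepts = {x | x ∈ M.accepts ∧ x ∈ N.accepts} := by
  ext x
  rw [DFA.mem_accepts]
  show (interDFA M N).evalFrom (M.start, N.start) x ∈ _ ↔ _
  rw [interDFA_evalFrom]
  exact Iff.rfl

lemma isRegular_inter {B : Type*} {L₁ L₂ : Language B}
    (h₁ : L₁.IsRegular) (h₂ : L₂.IsRegular) :
    Language.IsRegular {x | x ∈ L₁ ∧ x ∈ L₂} := by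
  obtain ⟨σ, hσ, M, hM⟩ := h₁
  obtain ⟨τ, hτ, N, hN⟩ := h₂
  have : (interDFA M N).accepts = {x | x ∈ L₁ ∧ x ∈ L₂} := by
    rw [interDFA_accepts, hM, hN]
  exact this ▸ isRegular_of_dfa (interDFA M N)

lemma geo_regular (π : A → G) (hgen : Generates π) {δ : ℕ} (hfftp : FFTP π δ) :
    Language.IsRegular {w : List A | IsGeodesicWord π w} := by
  obtain ⟨σ, hσ, M, hM⟩ := SLang_regular π hgen (Dgeo π δ)
  have hacc : (prefixAvoidDFA M).accepts = {w : List A | IsGeodesicWord π w} := by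
    rw [prefixAvoid_accepts, hM]
    ext w
    exact (geo_iff_no_prefix π hgen hfftp w).symm
  exact hacc ▸ isRegular_of_dfa (prefixAvoidDFA M)

/-- The language of words synchronously `D`-close to a member of `LL` with the
same value and length excess at most `K`. -/
def CloseTo (π : A → G) (LL : Language A) (D K : ℕ) : Language A :=
  {v | ∃ u ∈ LL, evalWord π u = evalWord π v ∧ v.length ≤ u.length ∧
    u.length ≤ v.length + K ∧
    ∀ t ≤ v.length, cayleyDist π (pathOf π u t) (pathOf π v t) ≤ D}

/-- The nondeterministic automaton for `CloseTo`: it guesses a word accepted by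
the DFA `M`, letter by letter, tracking the difference of path values. -/
def closeNFA (π : A → G) {σ : Type*} (M : DFA A σ) (D K : ℕ) :
    NFA A (σ × {g : G | wordLen π g ≤ D}) where
  step p b := {s | ∃ a : A, s.1 = M.step p.1 a ∧ (s.2 : G) = (π a)⁻¹ * p.2 * π b}
  start := {s | s.1 = M.start ∧ (s.2 : G) = 1}
  accept := {s | ∃ w : List A, w.length ≤ K ∧ evalWord π w = (s.2 : G) ∧
    M.evalFrom s.1 w ∈ M.accept}

lemma closeNFA_invariant (π : A → G) {σ : Type*} (M : DFA A σ) (D K : ℕ)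
    (v : List A) (s : σ × {g : G | wordLen π g ≤ D}) :
    s ∈ (closeNFA π M D K).evalFrom (closeNFA π M D K).start v ↔
      ∃ u : List A, u.length = v.length ∧ s.1 = M.evalFrom M.start u ∧
        (s.2 : G) = (evalWord π u)⁻¹ * evalWord π v ∧
        ∀ t ≤ v.length, wordLen π ((pathOf π u t)⁻¹ * pathOf π v t) ≤ D := by
  induction v using List.reverseRecOn generalizing s with
  | nil =>
      show s ∈ (closeNFA π M D K).start ↔ _
      constructor
      · rintro ⟨h1, h2⟩
        refine ⟨[], rfl, by rw [h1]; rfl, by rw [h2, evalWord_nil]; group, ?_⟩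
        intro t ht
        have ht0 : t = 0 := Nat.le_zero.mp ht
        subst ht0
        simp [pathOf_zero, wordLen_one]
      · rintro ⟨u, hul, hus, hue, -⟩
        have : u = [] := List.length_eq_zero_iff.mp hul
        subst this
        refine ⟨by rw [hus]; rfl, ?_⟩
        rw [hue, evalWord_nil]
        group
  | append_singleton v b ih =>
      rw [NFA.evalFrom_append, NFA.evalFrom_singleton, NFA.mem_stepSet]
      constructor
      · rintro ⟨p, hp, a, hsa, hsb⟩
        obtain ⟨u, hul, hus, hue, hub⟩ := (ih p).mp hp
        refine ⟨u ++ [a], by simp [hul], ?_, ?_, ?_⟩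
        · rw [hsa, DFA.evalFrom_append_singleton, hus]
        · rw [hsb, hue, evalWord_append, evalWord_append]
          simp only [evalWord_singleton]
          group
        · intro t ht
          rcases Nat.lt_or_ge t (v.length + 1) with htl | htl
          · have ht' : t ≤ v.length := by omega
            rw [pathOf_append_le π [b] ht', pathOf_append_le π [a] (by omega)]
            exact hub t ht'
          · have ht1 : t = v.length + 1 := by
              simp only [List.length_append, List.length_singleton] at ht
              omega
            have h1 : pathOf π (v ++ [b]) t = evalWord π (v ++ [b]) :=
              pathOf_of_le π (by simp [ht1])
            have h2 : pathOf π (u ++ [a]) t = evalWord π (u ++ [a]) :=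
              pathOf_of_le π (by simp [ht1, hul])
            rw [h1, h2]
            have heq : (evalWord π (u ++ [a]))⁻¹ * evalWord π (v ++ [b]) = (s.2 : G) := by
              rw [hsb, hue, evalWord_append, evalWord_append]
              simp only [evalWord_singleton]
              group
            rw [heq]
            exact s.2.2
      · rintro ⟨u, hul, hus, hue, hub⟩
        have hune : u ≠ [] := by
          intro h
          rw [h] at hul
          simp at hul
        rcases u.eq_nil_or_concat' with rfl | ⟨u', a, rfl⟩
        · exact absurd rfl hune
        have hu'l : u'.length = v.length := by
          simp only [List.length_append, List.length_singleton] at hul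
          omega
        have hball : wordLen π ((evalWord π u')⁻¹ * evalWord π v) ≤ D := by
          have h := hub v.length (by simp)
          rw [pathOf_append_le π (w := u') [a] (le_of_eq hu'l.symm),
            pathOf_append_le π (w := v) [b] le_rfl] at h
          simp only [pathOf, List.take_length] at h
          rw [← hu'l] at h
          rwa [List.take_length] at h
        refine ⟨(⟨M.evalFrom M.start u', ⟨(evalWord π u')⁻¹ * evalWord π v, hball⟩⟩ :
            σ × {g : G | wordLen π g ≤ D}), ?_, ?_⟩
        · refine (ih _).mpr ⟨u', hu'l, rfl, rfl, ?_⟩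
          intro t ht
          have h := hub t (by simp only [List.length_append, List.length_singleton]; omega)
          rwa [pathOf_append_le π [a] (by omega), pathOf_append_le π [b] ht] at h
        · refine ⟨a, ?_, ?_⟩
          · rw [hus, DFA.evalFrom_append_singleton]
          · show (s.2 : G) = (π a)⁻¹ * ((evalWord π u')⁻¹ * evalWord π v) * π b
            rw [hue, evalWord_append, evalWord_append]
            simp only [evalWord_singleton]
            group

lemma closeNFA_accepts (π : A → G) {σ : Type*} (M : DFA A σ) (D K : ℕ) :
    (closeNFA π M D K).accepts = CloseTo π M.accepts D K := by
  ext v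
  rw [NFA.mem_accepts]
  constructor
  · rintro ⟨s, ⟨w, hwK, hwe, hwacc⟩, hsr⟩
    obtain ⟨u, hul, hus, hue, hub⟩ := (closeNFA_invariant π M D K v s).mp hsr
    refine ⟨u ++ w, ?_, ?_, ?_, ?_, ?_⟩
    · rw [DFA.mem_accepts, DFA.eval, DFA.evalFrom_of_append, ← hus]
      exact hwacc
    · rw [evalWord_append, hwe, hue]
      group
    · simp only [List.length_append]
      omega
    · simp only [List.length_append]
      omega
    · intro t ht
      show wordLen π ((pathOf π (u ++ w) t)⁻¹ * pathOf π v t) ≤ D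
      rw [pathOf_append_le π w (by omega)]
      exact hub t ht
  · rintro ⟨u₀, hu₀acc, hu₀e, hu₀l, hu₀K, hu₀b⟩
    set u := u₀.take v.length with hu
    set w := u₀.drop v.length with hw
    have hul : u.length = v.length := by
      rw [hu, List.length_take]
      omega
    have huw : u ++ w = u₀ := List.take_append_drop _ _
    have hwl : w.length ≤ K := by
      rw [hw, List.length_drop]
      omega
    have hball : wordLen π ((evalWord π u)⁻¹ * evalWord π v) ≤ D := by
      have h := hu₀b v.length le_rfl
      show wordLen π _ ≤ D
      have hpu : pathOf π u₀ v.length = evalWord π u := by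
        rw [pathOf, ← hu]
      have hpv : pathOf π v v.length = evalWord π v := by
        rw [pathOf, List.take_length]
      rwa [hpu, hpv] at h
    refine ⟨(⟨M.evalFrom M.start u, ⟨(evalWord π u)⁻¹ * evalWord π v, hball⟩⟩ :
        σ × {g : G | wordLen π g ≤ D}), ⟨w, hwl, ?_, ?_⟩, ?_⟩
    · show evalWord π w = (evalWord π u)⁻¹ * evalWord π v
      have : evalWord π u * evalWord π w = evalWord π v := by
        rw [← evalWord_append, huw, hu₀e]
      rw [← this]
      group
    · show M.evalFrom (M.evalFrom M.start u) w ∈ M.accept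
      rw [← DFA.evalFrom_of_append, huw]
      exact hu₀acc
    · refine (closeNFA_invariant π M D K v _).mpr ⟨u, hul, rfl, rfl, ?_⟩
      intro t ht
      have h := hu₀b t ht
      have hpu : pathOf π u₀ t = pathOf π u t := by
        rw [pathOf, pathOf, hu, List.take_take, min_eq_left ht]
      rwa [hpu] at h

lemma closeTo_regular (π : A → G) (hgen : Generates π) {LL : Language A}
    (h : LL.IsRegular) (D K : ℕ) : (CloseTo π LL D K).IsRegular := by
  classical
  obtain ⟨σ, hσ, M, hM⟩ := h
  haveI : Fintype {g : G | wordLen π g ≤ D} := (ball_finite π hgen D).fintype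
  have hacc : (closeNFA π M D K).toDFA.accepts = CloseTo π LL D K := by
    rw [NFA.toDFA_correct, closeNFA_accepts, hM]
  exact hacc ▸ isRegular_of_dfa (closeNFA π M D K).toDFA

end Automata

end Aux

/-- **Lemma 5.1.** Over a generating set with the falsification by fellow traveller
property, an almost geodesic automatic structure is equivalent to a geodesic one. -/
theorem almost_geodesic_to_geodesic {A G : Type*} [Fintype A] [Group G]
    (π : A → G) (hgen : Generates π) (δ : ℕ) (hfftp : FFTP π δ)
    (L : Language A) (hL : IsAutomaticStructure π L)
    (K : ℕ) (halmost : ∀ u ∈ L, u.length ≤ wordLen π (evalWord π u) + K) :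
    ∃ L' : Language A, IsAutomaticStructure π L' ∧ (∀ w ∈ L', IsGeodesicWord π w) ∧
      EquivStructures π L L' := by
  classical
  obtain ⟨hreg, hsurjL, δL, hsyncL⟩ := hL
  obtain hrev : ∀ (x y : G) (D' : ℕ), cayleyDist π x y ≤ D' →
      cayleyDist π y x ≤ Cinv π * D' :=
    fun x y D' h => le_trans (cayleyDist_rev π hgen x y) (Nat.mul_le_mul_left _ h)
  -- the synchronisation constant
  set L' : Language A :=
    {w | IsGeodesicWord π w ∧ w ∈ CloseTo π L (K * δ + 2 * Cinv π * (K * δ) + K) K}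
    with hL'def
  have hmem_surj : ∀ g : G, ∃ v, v ∈ L' ∧ evalWord π v = g := by
    intro g
    obtain ⟨u, huL, hue⟩ := hsurjL g
    have hj : u.length ≤ wordLen π (evalWord π u) + K := halmost u huL
    obtain ⟨v, hve, hvg, hvf⟩ := exists_geodesic_fellow π hgen hfftp K u hj
    have hvlen : v.length = wordLen π (evalWord π u) := by
      have h : v.length = wordLen π (evalWord π v) := hvg
      rw [hve] at h
      exact h
    have hwle : wordLen π (evalWord π u) ≤ u.length := wordLen_le_length π u
    have hsync := sync_of_async π hgen (j := K) hvg hve (by omega) hvf.1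
    refine ⟨v, ⟨hvg, ⟨u, huL, hve.symm, by omega, by omega, fun t _ => hsync t⟩⟩,
      by rw [hve, hue]⟩
  have hclose : ∀ v ∈ L', ∃ u ∈ L, evalWord π u = evalWord π v ∧
      ∀ t, cayleyDist π (pathOf π u t) (pathOf π v t)
        ≤ (K * δ + 2 * Cinv π * (K * δ) + K) + K := by
    rintro v ⟨-, u, huL, hue, hvu, huK, hub⟩
    refine ⟨u, huL, hue, fun t => ?_⟩
    rcases le_or_gt t v.length with ht | ht
    · exact le_trans (hub t ht) (by omega)
    · have h1 : pathOf π v t = evalWord π v := pathOf_of_le π (by omega)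
      have h2 : (pathOf π u t)⁻¹ * evalWord π u = evalWord π (u.drop t) := by
        rw [← pathOf_mul_drop π u t]
        group
      show wordLen π ((pathOf π u t)⁻¹ * pathOf π v t) ≤ _
      rw [h1, ← hue, h2]
      calc wordLen π (evalWord π (u.drop t)) ≤ (u.drop t).length :=
            wordLen_le_length π _
        _ ≤ _ := by rw [List.length_drop]; omega
  set BB := (K * δ + 2 * Cinv π * (K * δ) + K) + K with hBB
  refine ⟨L', ⟨?_, ?_, ?_⟩, ?_, ?_⟩
  · -- regularity
    exact isRegular_inter (geo_regular π hgen hfftp)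
      (closeTo_regular π hgen hreg (K * δ + 2 * Cinv π * (K * δ) + K) K)
  · -- surjectivity
    intro g
    obtain ⟨v, hv, hve⟩ := hmem_surj g
    exact ⟨v, hv, hve⟩
  · -- synchronous fellow traveller property
    refine ⟨Cinv π * BB + δL + BB, ?_⟩
    intro u' hu' v' hv' hrel t
    obtain ⟨u₁, hu₁L, hu₁e, hu₁b⟩ := hclose u' hu'
    obtain ⟨v₁, hv₁L, hv₁e, hv₁b⟩ := hclose v' hv'
    have hrel' : (∃ a : A, evalWord π v₁ = evalWord π u₁ * π a) ∨
        evalWord π v₁ = evalWord π u₁ := by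
      rcases hrel with ⟨a, ha⟩ | ha
      · exact Or.inl ⟨a, by rw [hv₁e, hu₁e, ha]⟩
      · exact Or.inr (by rw [hv₁e, hu₁e, ha])
    have hmid := hsyncL u₁ hu₁L v₁ hv₁L hrel' t
    have h1 : cayleyDist π (pathOf π u' t) (pathOf π u₁ t) ≤ Cinv π * BB :=
      hrev _ _ _ (hu₁b t)
    have tri1 := cayleyDist_triangle π hgen
      (pathOf π u' t) (pathOf π u₁ t) (pathOf π v₁ t)
    have tri2 := cayleyDist_triangle π hgen
      (pathOf π u' t) (pathOf π v₁ t) (pathOf π v' t)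
    have hsum : cayleyDist π (pathOf π u' t) (pathOf π v₁ t)
        ≤ Cinv π * BB + δL := le_trans tri1 (Nat.add_le_add h1 hmid)
    exact le_trans tri2 (Nat.add_le_add hsum (hv₁b t))
  · -- geodesity
    intro w hw
    exact hw.1
  · -- equivalence of the two structures
    refine ⟨(δL + BB) + Cinv π * (δL + BB), ?_⟩
    have main : ∀ u v : List A, u ∈ L → v ∈ L' → evalWord π u = evalWord π v →
        ∀ t, cayleyDist π (pathOf π u t) (pathOf π v t) ≤ δL + BB := by
      intro u v huL hv he t
      obtain ⟨u₁, hu₁L, hu₁e, hu₁b⟩ := hclose v hv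
      have h1 := hsyncL u huL u₁ hu₁L (Or.inr (by rw [hu₁e, he])) t
      have tri := cayleyDist_triangle π hgen
        (pathOf π u t) (pathOf π u₁ t) (pathOf π v t)
      exact le_trans tri (Nat.add_le_add h1 (hu₁b t))
    intro u v hcase he
    rcases hcase with ⟨huL, hvL'⟩ | ⟨huL', hvL⟩
    · have hall := main u v huL hvL' he
      constructor
      · exact ⟨id, monotone_id, fun N => ⟨N, le_rfl⟩,
          fun t => le_trans (hall t) (Nat.le_add_right _ _)⟩
      · exact ⟨id, monotone_id, fun N => ⟨N, le_rfl⟩,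
          fun t => le_trans (hrev _ _ _ (hall t)) (Nat.le_add_left _ _)⟩
    · have hall := main v u hvL huL' he.symm
      constructor
      · exact ⟨id, monotone_id, fun N => ⟨N, le_rfl⟩,
          fun t => le_trans (hrev _ _ _ (hall t)) (Nat.le_add_left _ _)⟩
      · exact ⟨id, monotone_id, fun N => ⟨N, le_rfl⟩,
          fun t => le_trans (hall t) (Nat.le_add_right _ _)⟩
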